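/- Let f be a bounded measurable function on [0,∞) with f > ε almost everywhere for some ε > 0, and |f(r) − 1| ≤ J e^{−2r} almost everywhere for a constant J > 0. If λ solves λ' + λ² = f with λ(0) > 0, then λ is positive and there exists C > 0 depending only on J and λ(0) such that |λ(r) − 1| ≤ C (r+1) e^{−2r} for all r > 0. -/

import Mathlib

open MeasureTheory Real Set

lemma riccati_aux_II {g : ℝ → ℝ} (hg : Measurable g) {a b K : ℝ} (hab : a ≤ b)
    (hK : ∀ t ∈ Set.Ioc a b, |g t| ≤ K) : IntervalIntegrable g volume a b := by
  rw [intervalIntegrable_iff, uIoc_of_le hab]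
  have hconst : IntegrableOn (fun _ => K) (Ioc a b) volume :=
    (integrableOn_const_iff).mpr (Or.inr measure_Ioc_lt_top)
  refine Integrable.mono' hconst hg.aestronglyMeasurable.restrict ?_
  refine (ae_restrict_iff' measurableSet_Ioc).mpr (Filter.Eventually.of_forall fun t ht => ?_)
  simpa [Real.norm_eq_abs] using hK t ht

/-- Lemma on the scalar Riccati equation, borderline case `a = 2`: if `f` is bounded, measurable,
`f > ε` a.e. and `|f - 1| ≤ J e^{-2r}` a.e. on `[0,∞)`, and `λ' + λ² = f` with `λ(0) > 0`,
then `λ` is positive and `|λ - 1| ≤ C (r+1) e^{-2r}`. -/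
theorem riccati_decay_a_eq_two
    (J ε : ℝ) (hJ : 0 < J) (hε : 0 < ε)
    (f lam : ℝ → ℝ)
    (hf_meas : Measurable f)
    (hf_bdd : ∃ M : ℝ, ∀ r ≥ (0:ℝ), |f r| ≤ M)
    (hf_pos : ∀ᵐ r ∂(volume.restrict (Ici (0:ℝ))), ε < f r)
    (hf_close : ∀ᵐ r ∂(volume.restrict (Ici (0:ℝ))), |f r - 1| ≤ J * exp (-2 * r))
    (hlam : ∀ r ≥ (0:ℝ), HasDerivAt lam (f r - lam r ^ 2) r)
    (h0 : 0 < lam 0) :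
    (∀ r ≥ (0:ℝ), 0 < lam r) ∧
      ∃ C > 0, ∀ r > (0:ℝ), |lam r - 1| ≤ C * (r + 1) * exp (-2 * r) := by
  obtain ⟨M, hM⟩ := hf_bdd
  have hM0 : 0 ≤ M := le_trans (abs_nonneg _) (hM 0 le_rfl)
  have hcontOn : ContinuousOn lam (Ici 0) :=
    fun r hr => ((hlam r hr).continuousAt).continuousWithinAt
  set lamt : ℝ → ℝ := fun r => lam (max r 0) with hlamt_def
  have hlamt_cont : Continuous lamt :=
    hcontOn.comp_continuous (continuous_id.max continuous_const) fun x => Set.mem_Ici.mpr (le_max_right _ _)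
  have hlamt_eq : ∀ r, 0 ≤ r → lamt r = lam r := fun r hr => by
    simp only [hlamt_def, max_eq_left hr]
  have intF : ∀ a b : ℝ, 0 ≤ a → a ≤ b → IntervalIntegrable f volume a b :=
    fun a b h0a hab => riccati_aux_II hf_meas hab (fun t ht => hM t (h0a.trans ht.1.le))
  have intD : ∀ a b : ℝ, 0 ≤ a → a ≤ b →
      IntervalIntegrable (fun t => f t - lam t ^ 2) volume a b := by
    intro a b h0a hab
    refine (intF a b h0a hab).sub (ContinuousOn.intervalIntegrable ?_)
    exact (hcontOn.mono (by rw [uIcc_of_le hab]; exact fun t ht => h0a.trans ht.1)).pow 2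
  have hFTC : ∀ a b : ℝ, 0 ≤ a → a ≤ b →
      lam b - lam a = ∫ t in a..b, (f t - lam t ^ 2) := by
    intro a b h0a hab
    refine (intervalIntegral.integral_eq_sub_of_hasDerivAt (fun x hx => hlam x ?_)
      (intD a b h0a hab)).symm
    rw [uIcc_of_le hab] at hx
    exact h0a.trans hx.1
  -- Step 1 : positivity
  have hpos : ∀ r, 0 ≤ r → 0 < lam r := by
    by_contra hcon
    push_neg at hcon
    obtain ⟨r₁, hr₁0, hr₁⟩ := hcon
    set S : Set ℝ := Ici 0 ∩ lamt ⁻¹' Iic 0 with hS_def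
    have hSne : S.Nonempty := ⟨r₁, hr₁0, by
      simp only [mem_preimage, mem_Iic, hlamt_eq r₁ hr₁0]; exact hr₁⟩
    have hSbd : BddBelow S := ⟨0, fun x hx => hx.1⟩
    have hScl : IsClosed S := isClosed_Ici.inter (isClosed_Iic.preimage hlamt_cont)
    set r₀ := sInf S with hr₀_def
    have hr₀S : r₀ ∈ S := hScl.csInf_mem hSne hSbd
    have hr₀0 : 0 ≤ r₀ := hr₀S.1
    have hlr₀ : lam r₀ ≤ 0 := by
      have h1 := hr₀S.2
      rwa [mem_preimage, mem_Iic, hlamt_eq r₀ hr₀0] at h1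
    have hr₀pos : 0 < r₀ := by
      rcases lt_or_eq_of_le hr₀0 with h | h
      · exact h
      · exact absurd (h ▸ hlr₀) (not_le.mpr h0)
    have hbefore : ∀ s, 0 ≤ s → s < r₀ → 0 < lam s := by
      intro s hs0 hsr
      by_contra hns
      push_neg at hns
      have hmem : s ∈ S := ⟨hs0, by
        simp only [mem_preimage, mem_Iic, hlamt_eq s hs0]; exact hns⟩
      exact absurd (csInf_le hSbd hmem) (not_le.mpr hsr)
    set c := Real.sqrt (ε / 2) with hc_def
    have hc_pos : 0 < c := Real.sqrt_pos.mpr (by linarith)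
    have hc_sq : c ^ 2 = ε / 2 := Real.sq_sqrt (by linarith)
    obtain ⟨δ, hδpos, hδ⟩ := Metric.continuousAt_iff.mp (hlamt_cont.continuousAt (x := r₀)) c hc_pos
    set s := max (r₀ - δ/2) (r₀/2) with hs_def
    have hs0 : 0 < s := lt_of_lt_of_le (by linarith) (le_max_right _ _)
    have hsr : s < r₀ := max_lt (by linarith) (by linarith)
    have hdist : ∀ t, s ≤ t → t ≤ r₀ → dist t r₀ < δ := by
      intro t h1 h2
      have h3 : r₀ - δ/2 ≤ s := le_max_left _ _
      rw [Real.dist_eq, abs_sub_comm, abs_of_nonneg (by linarith)]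
      linarith
    have hlam_s : 0 < lam s := hbefore s hs0.le hsr
    have hlr₀' : -c < lam r₀ := by
      have h1 := hδ (hdist s le_rfl hsr.le)
      rw [Real.dist_eq, hlamt_eq s hs0.le, hlamt_eq r₀ hr₀0] at h1
      have h2 := abs_lt.mp h1
      linarith [h2.2]
    have hsq : ∀ t ∈ Icc s r₀, lam t ^ 2 ≤ ε / 2 := by
      rintro t ⟨ht1, ht2⟩
      have ht0 : 0 ≤ t := le_trans hs0.le ht1
      have habs : |lam t| ≤ c := by
        rcases eq_or_lt_of_le ht2 with h | h
        · rw [h]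
          exact abs_le.mpr ⟨hlr₀'.le, by linarith⟩
        · have hp := hbefore t ht0 h
          have h1 := hδ (hdist t ht1 ht2)
          rw [Real.dist_eq, hlamt_eq t ht0, hlamt_eq r₀ hr₀0] at h1
          have h2 := abs_lt.mp h1
          exact abs_le.mpr ⟨by linarith, by linarith [h2.2]⟩
      have h3 := pow_le_pow_left₀ (abs_nonneg (lam t)) habs 2
      rw [sq_abs] at h3
      linarith
    have hae : (fun _ => ε/2) ≤ᵐ[volume.restrict (Icc s r₀)] fun t => f t - lam t ^ 2 := by
      have hsub : Icc s r₀ ⊆ Ici (0:ℝ) := fun t ht => hs0.le.trans ht.1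
      have h1 : ∀ᵐ t ∂volume.restrict (Icc s r₀), ε < f t :=
        ae_restrict_of_ae_restrict_of_subset hsub hf_pos
      filter_upwards [h1, ae_restrict_mem measurableSet_Icc] with t h1t h2t
      have h3 := hsq t h2t
      show ε/2 ≤ f t - lam t ^ 2
      linarith
    have hmono := intervalIntegral.integral_mono_ae_restrict hsr.le intervalIntegrable_const
      (intD s r₀ hs0.le hsr.le) hae
    rw [intervalIntegral.integral_const, smul_eq_mul] at hmono
    have hftc := hFTC s r₀ hs0.le hsr.le
    have hprod : 0 < (r₀ - s) * (ε/2) := mul_pos (by linarith) (by linarith)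
    linarith
  refine ⟨fun r hr => hpos r hr, ?_⟩
  -- Step 2 : decay
  have hlamt_pos : ∀ r, 0 < lamt r := fun r => hpos _ (le_max_right _ _)
  have hg_cont : Continuous fun t => lamt t + 1 := hlamt_cont.add continuous_const
  set Iint : ℝ → ℝ := fun r => ∫ t in (0:ℝ)..r, (lamt t + 1) with hI_def
  have hI_deriv : ∀ r, HasDerivAt Iint (lamt r + 1) r := fun r =>
    intervalIntegral.integral_hasDerivAt_right (hg_cont.intervalIntegrable _ _)
      hg_cont.stronglyMeasurable.stronglyMeasurableAtFilter hg_cont.continuousAt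
  have hI_cont : Continuous Iint := continuous_iff_continuousAt.mpr fun r => (hI_deriv r).continuousAt
  have hI_sub : ∀ s r : ℝ, Iint r - Iint s = ∫ t in s..r, (lamt t + 1) := fun s r =>
    intervalIntegral.integral_interval_sub_left (hg_cont.intervalIntegrable _ _)
      (hg_cont.intervalIntegrable _ _)
  have hI_ge : ∀ s r : ℝ, s ≤ r → r - s ≤ Iint r - Iint s := by
    intro s r hsr
    rw [hI_sub s r]
    have h1 : ∫ _t in s..r, (1:ℝ) ≤ ∫ t in s..r, (lamt t + 1) :=
      intervalIntegral.integral_mono_on hsr intervalIntegrable_const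
        (hg_cont.intervalIntegrable _ _) (fun t _ => by linarith [hlamt_pos t])
    simpa using h1
  set Φ : ℝ → ℝ := fun r => Real.exp (Iint r) with hΦ_def
  have hΦ_pos : ∀ r, 0 < Φ r := fun r => Real.exp_pos _
  have hΦ_deriv : ∀ r, HasDerivAt Φ (Real.exp (Iint r) * (lamt r + 1)) r := fun r => (hI_deriv r).exp
  have hI0 : Iint 0 = 0 := intervalIntegral.integral_same
  have hΦ0 : Φ 0 = 1 := by simp [hΦ_def, hI0]
  have hΦcont : Continuous Φ := Real.continuous_exp.comp hI_cont
  have hΦmono : ∀ s r : ℝ, s ≤ r → Φ s ≤ Φ r := fun s r hsr =>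
    Real.exp_le_exp.mpr (by linarith [hI_ge s r hsr])
  have hh_deriv : ∀ r, 0 ≤ r →
      HasDerivAt (fun u => (lam u - 1) * Φ u) (Φ r * (f r - 1)) r := by
    intro r hr
    have hd : HasDerivAt (fun u => (lam u - 1) * Φ u) _ r :=
      ((hlam r hr).sub_const 1).mul (hΦ_deriv r)
    convert hd using 1
    rw [hlamt_eq r hr]
    show Real.exp (Iint r) * (f r - 1) = _
    ring
  have intΦg : ∀ r, 0 ≤ r → IntervalIntegrable (fun t => Φ t * (f t - 1)) volume 0 r := by
    intro r hr
    refine riccati_aux_II (K := Φ r * (M + 1)) (hΦcont.measurable.mul (hf_meas.sub measurable_const)) hr ?_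
    intro t ht
    show |Φ t * (f t - 1)| ≤ _
    rw [abs_mul, abs_of_pos (hΦ_pos t)]
    have h1 : Φ t ≤ Φ r := hΦmono t r ht.2
    have h2 : |f t - 1| ≤ M + 1 := by
      have h3 := hM t ht.1.le
      calc |f t - 1| ≤ |f t| + |1| := abs_sub _ _
        _ ≤ M + 1 := by simpa using h3
    exact mul_le_mul h1 h2 (abs_nonneg _) (hΦ_pos r).le
  have hFTCh : ∀ r, 0 ≤ r →
      (lam r - 1) * Φ r = (lam 0 - 1) + ∫ t in (0:ℝ)..r, Φ t * (f t - 1) := by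
    intro r hr
    have h1 := intervalIntegral.integral_eq_sub_of_hasDerivAt
      (f := fun u => (lam u - 1) * Φ u) (f' := fun t => Φ t * (f t - 1))
      (fun x hx => hh_deriv x (by rw [uIcc_of_le hr] at hx; exact hx.1)) (intΦg r hr)
    have h2 : ∫ t in (0:ℝ)..r, Φ t * (f t - 1) = (lam r - 1) * Φ r - (lam 0 - 1) * Φ 0 := h1
    rw [hΦ0] at h2
    linarith
  set C₁ : ℝ := |lam 0 - 1| + J with hC₁_def
  have hC₁_pos : 0 < C₁ := add_pos_of_nonneg_of_pos (abs_nonneg _) hJ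
  have hexp2 : Continuous fun t : ℝ => Real.exp (-2*t) :=
    Real.continuous_exp.comp (continuous_const.mul continuous_id)
  have intΦe : ∀ a b : ℝ, IntervalIntegrable (fun t => Φ t * (J * Real.exp (-2*t))) volume a b :=
    fun a b => (hΦcont.mul (continuous_const.mul hexp2)).intervalIntegrable _ _
  have hkey : ∀ r, 0 ≤ r →
      |(lam r - 1) * Φ r| ≤ |lam 0 - 1| + ∫ t in (0:ℝ)..r, Φ t * (J * Real.exp (-2*t)) := by
    intro r hr
    rw [hFTCh r hr]
    refine (abs_add_le _ _).trans (add_le_add le_rfl ?_)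
    refine (intervalIntegral.abs_integral_le_integral_abs hr).trans ?_
    refine intervalIntegral.integral_mono_ae_restrict hr ((intΦg r hr).abs) (intΦe 0 r) ?_
    have h1 : ∀ᵐ t ∂volume.restrict (Icc (0:ℝ) r), |f t - 1| ≤ J * Real.exp (-2*t) :=
      ae_restrict_of_ae_restrict_of_subset (fun t ht => ht.1) hf_close
    filter_upwards [h1] with t h1t
    show |Φ t * (f t - 1)| ≤ Φ t * (J * Real.exp (-2*t))
    rw [abs_mul, abs_of_pos (hΦ_pos t)]
    exact mul_le_mul_of_nonneg_left h1t (hΦ_pos t).le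
  have hIexp : ∀ s r : ℝ, ∫ t in s..r, Real.exp (-t) = Real.exp (-s) - Real.exp (-r) := by
    intro s r
    have hd : ∀ t : ℝ, HasDerivAt (fun u => -Real.exp (-u)) (Real.exp (-t)) t := by
      intro t
      have h1 : HasDerivAt (fun u : ℝ => -u) (-1) t := (hasDerivAt_id t).neg
      have h2 : HasDerivAt (fun u => -Real.exp (-u)) _ t := h1.exp.neg
      convert h2 using 1
      ring
    rw [intervalIntegral.integral_eq_sub_of_hasDerivAt (fun t _ => hd t)
      ((Real.continuous_exp.comp continuous_neg).intervalIntegrable _ _)]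
    ring
  -- Pass 1
  have hP1 : ∀ r, 0 ≤ r → |lam r - 1| ≤ C₁ * Real.exp (-r) := by
    intro r hr
    have hbound : ∫ t in (0:ℝ)..r, Φ t * (J * Real.exp (-2*t)) ≤
        J * (Φ r * Real.exp (-r)) * (Real.exp (-(0:ℝ)) - Real.exp (-r)) := by
      have hmono : ∫ t in (0:ℝ)..r, Φ t * (J * Real.exp (-2*t)) ≤
          ∫ t in (0:ℝ)..r, J * (Φ r * Real.exp (-r)) * Real.exp (-t) := by
        refine intervalIntegral.integral_mono_on hr (intΦe 0 r)
          ((continuous_const.mul (Real.continuous_exp.comp continuous_neg)).intervalIntegrable _ _) ?_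
        intro t ht
        have h1 : Φ t ≤ Φ r * Real.exp (t - r) := by
          have h2 := hI_ge t r ht.2
          show Real.exp (Iint t) ≤ Real.exp (Iint r) * Real.exp (t - r)
          rw [← Real.exp_add]
          exact Real.exp_le_exp.mpr (by linarith)
        have e : Real.exp (t - r) * Real.exp (-2*t) = Real.exp (-r) * Real.exp (-t) := by
          rw [← Real.exp_add, ← Real.exp_add]; congr 1; ring
        have h3 : Φ t * (J * Real.exp (-2*t)) ≤
            (Φ r * Real.exp (t - r)) * (J * Real.exp (-2*t)) :=
          mul_le_mul_of_nonneg_right h1 (by positivity)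
        calc Φ t * (J * Real.exp (-2*t)) ≤ (Φ r * Real.exp (t - r)) * (J * Real.exp (-2*t)) := h3
          _ = J * (Φ r * Real.exp (-r)) * Real.exp (-t) := by linear_combination (J * Φ r) * e
      rw [intervalIntegral.integral_const_mul, hIexp] at hmono
      exact hmono
    have h3 : Real.exp (-(0:ℝ)) - Real.exp (-r) ≤ 1 := by
      rw [neg_zero, Real.exp_zero]
      linarith [Real.exp_pos (-r)]
    have h4 : (1:ℝ) ≤ Φ r * Real.exp (-r) := by
      have h5 := hI_ge 0 r hr
      rw [hI0] at h5
      show (1:ℝ) ≤ Real.exp (Iint r) * Real.exp (-r)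
      rw [← Real.exp_add]
      calc (1:ℝ) = Real.exp 0 := Real.exp_zero.symm
        _ ≤ Real.exp (Iint r + -r) := Real.exp_le_exp.mpr (by linarith)
    have hk := hkey r hr
    have e1 : |lam 0 - 1| ≤ |lam 0 - 1| * (Φ r * Real.exp (-r)) :=
      le_mul_of_one_le_right (abs_nonneg _) h4
    have e2 : J * (Φ r * Real.exp (-r)) * (Real.exp (-(0:ℝ)) - Real.exp (-r)) ≤
        J * (Φ r * Real.exp (-r)) := by
      have hnn : 0 ≤ J * (Φ r * Real.exp (-r)) := by positivity
      nlinarith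
    have e3 : C₁ * Real.exp (-r) * Φ r =
        |lam 0 - 1| * (Φ r * Real.exp (-r)) + J * (Φ r * Real.exp (-r)) := by
      rw [hC₁_def]; ring
    have h6 : |(lam r - 1) * Φ r| ≤ C₁ * Real.exp (-r) * Φ r := by linarith
    rw [abs_mul, abs_of_pos (hΦ_pos r)] at h6
    exact le_of_mul_le_mul_right h6 (hΦ_pos r)
  -- Pass 2
  have hI2 : ∀ t r : ℝ, 0 ≤ t → t ≤ r → 2*(r-t) - C₁ ≤ Iint r - Iint t := by
    intro t r ht htr
    rw [hI_sub t r]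
    have hce : Continuous fun u : ℝ => C₁ * Real.exp (-u) :=
      continuous_const.mul (Real.continuous_exp.comp continuous_neg)
    have hmono : ∫ u in t..r, ((2:ℝ) - C₁ * Real.exp (-u)) ≤ ∫ u in t..r, (lamt u + 1) := by
      refine intervalIntegral.integral_mono_on htr ((continuous_const.sub hce).intervalIntegrable _ _)
        (hg_cont.intervalIntegrable _ _) ?_
      intro u hu
      have hu0 : 0 ≤ u := le_trans ht hu.1
      have habs := abs_le.mp (hP1 u hu0)
      rw [hlamt_eq u hu0]
      linarith [habs.1]
    have hcomp : ∫ u in t..r, ((2:ℝ) - C₁ * Real.exp (-u)) =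
        2*(r-t) - C₁*(Real.exp (-t) - Real.exp (-r)) := by
      rw [intervalIntegral.integral_sub intervalIntegrable_const (hce.intervalIntegrable _ _),
        intervalIntegral.integral_const_mul, hIexp, intervalIntegral.integral_const, smul_eq_mul]
      ring
    have h6 : Real.exp (-t) ≤ 1 := by
      calc Real.exp (-t) ≤ Real.exp 0 := Real.exp_le_exp.mpr (by linarith)
        _ = 1 := Real.exp_zero
    nlinarith [Real.exp_pos (-r)]
  refine ⟨Real.exp C₁ * C₁, by positivity, ?_⟩
  intro r hr
  have hr0 : 0 ≤ r := hr.le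
  have hΦinv : 1 ≤ Φ r * (Real.exp C₁ * Real.exp (-2*r)) := by
    have h1 := hI2 0 r le_rfl hr0
    rw [hI0] at h1
    show (1:ℝ) ≤ Real.exp (Iint r) * (Real.exp C₁ * Real.exp (-2*r))
    rw [← Real.exp_add, ← Real.exp_add]
    calc (1:ℝ) = Real.exp 0 := Real.exp_zero.symm
      _ ≤ _ := Real.exp_le_exp.mpr (by linarith)
  have hptwise : ∀ t ∈ Icc (0:ℝ) r,
      Φ t * (J * Real.exp (-2*t)) ≤ J * (Φ r * (Real.exp C₁ * Real.exp (-2*r))) := by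
    intro t ht
    have h1 : Φ t ≤ Φ r * (Real.exp C₁ * Real.exp (-(2*(r-t)))) := by
      have h2 := hI2 t r ht.1 ht.2
      show Real.exp (Iint t) ≤ Real.exp (Iint r) * (Real.exp C₁ * Real.exp (-(2*(r-t))))
      rw [← Real.exp_add, ← Real.exp_add]
      exact Real.exp_le_exp.mpr (by linarith)
    have e : Real.exp (-(2*(r-t))) * Real.exp (-2*t) = Real.exp (-2*r) := by
      rw [← Real.exp_add]; congr 1; ring
    have h3 : Φ t * (J * Real.exp (-2*t)) ≤
        (Φ r * (Real.exp C₁ * Real.exp (-(2*(r-t))))) * (J * Real.exp (-2*t)) :=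
      mul_le_mul_of_nonneg_right h1 (by positivity)
    calc Φ t * (J * Real.exp (-2*t)) ≤
        (Φ r * (Real.exp C₁ * Real.exp (-(2*(r-t))))) * (J * Real.exp (-2*t)) := h3
      _ = J * (Φ r * (Real.exp C₁ * Real.exp (-2*r))) := by
        linear_combination (Φ r * Real.exp C₁ * J) * e
  have hint_bound : ∫ t in (0:ℝ)..r, Φ t * (J * Real.exp (-2*t)) ≤
      r * (J * (Φ r * (Real.exp C₁ * Real.exp (-2*r)))) := by
    have h1 := intervalIntegral.integral_mono_on hr0 (intΦe 0 r)
      intervalIntegrable_const hptwise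
    rwa [intervalIntegral.integral_const, smul_eq_mul, sub_zero] at h1
  have hk := hkey r hr0
  set E := Real.exp C₁ * Real.exp (-2*r) with hE
  have hE_pos : 0 < E := by rw [hE]; positivity
  have e1 : |lam 0 - 1| ≤ |lam 0 - 1| * (Φ r * E) :=
    le_mul_of_one_le_right (abs_nonneg _) hΦinv
  have e2 : (|lam 0 - 1| + J*r) * (Φ r * E) =
      |lam 0 - 1| * (Φ r * E) + r * (J * (Φ r * E)) := by ring
  have hhr : |(lam r - 1) * Φ r| ≤ (|lam 0 - 1| + J * r) * (Φ r * E) := by linarith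
  have e3 : |lam 0 - 1| + J * r ≤ C₁ * (r + 1) := by
    rw [hC₁_def]
    nlinarith [abs_nonneg (lam 0 - 1)]
  have e4 : (Real.exp C₁ * C₁ * (r+1) * Real.exp (-2*r)) * Φ r = (C₁ * (r + 1)) * (Φ r * E) := by
    rw [hE]; ring
  have h7 : (|lam 0 - 1| + J * r) * (Φ r * E) ≤ (C₁ * (r + 1)) * (Φ r * E) :=
    mul_le_mul_of_nonneg_right e3 (by positivity)
  have h8 : |(lam r - 1)| * Φ r ≤ (Real.exp C₁ * C₁ * (r+1) * Real.exp (-2*r)) * Φ r := by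
    rw [e4]
    calc |lam r - 1| * Φ r = |(lam r - 1) * Φ r| := by
          rw [abs_mul, abs_of_pos (hΦ_pos r)]
      _ ≤ (|lam 0 - 1| + J * r) * (Φ r * E) := hhr
      _ ≤ (C₁ * (r + 1)) * (Φ r * E) := h7
  exact le_of_mul_le_mul_right h8 (hΦ_pos r)
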